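/- arXiv:1909.09813 — 4 statements merged into one kernel-verified Lean document; each statement's English description precedes it below -/
import Mathlib

section
/- Positivity of the first-order moving-mesh finite volume scheme with Rusanov flux (Theorem 1 of the paper): Let γ > 1 and β ∈ (0,1). Let (ρ_{j−1}, v_{j−1}, p_{j−1}), (ρ_j, v_j, p_j), (ρ_{j+1}, v_{j+1}, p_{j+1}) be primitive states with positive densities and positive pressures, with conserved vectors U_{j−1}, U_j, U_{j+1} and sound speeds c_{j−1}, c_j, c_{j+1}. Let w⁻, w⁺ ∈ ℝ be face velocities, let λ⁻ = max(|v_{j−1}−w⁻|+c_{j−1}, |v_j−w⁻|+c_j) and λ⁺ = max(|v_j−w⁺|+c_j, |v_{j+1}−w⁺|+c_{j+1}), and let ĝ⁻ = ĝ(U_{j−1},U_j,w⁻), ĝ⁺ = ĝ(U_j,U_{j+1},w⁺) be the Rusanov numerical fluxes. Let h > 0 and Δt > 0 satisfy Δt ≤ (1 − β/2)·h / (½(λ⁻ + λ⁺)) and Δt·|w⁺ − w⁻| ≤ β·h. Set h' = h + Δt(w⁺ − w⁻) and (ρ', m', E') = U' = (h·U_j − Δt(ĝ⁺ − ĝ⁻))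 / h'. Then h' > 0, ρ' > 0 and (γ−1)(E' − m'²/(2ρ')) > 0, i.e. the updated cell average has positive density and positive pressure. -/
noncomputable section

/-- Conserved vector `U = (ρ, ρv, E)` of a primitive state `(ρ, v, p)`,
with `E = p/(γ-1) + ρ v²/2`. -/
def consU (γ ρ v p : ℝ) : ℝ × ℝ × ℝ := (ρ, ρ * v, p / (γ - 1) + ρ * v ^ 2 / 2)

/-- Euler flux `F(U) = (ρv, p + ρv², (E+p)v)`. -/
def eulerFlux (γ ρ v p : ℝ) : ℝ × ℝ × ℝ :=
  (ρ * v, p + ρ * v ^ 2, (p / (γ - 1) + ρ * v ^ 2 / 2 + p) * v)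

/-- ALE flux `g(U,w) = F(U) − w U`. -/
def aleFlux (γ ρ v p w : ℝ) : ℝ × ℝ × ℝ := eulerFlux γ ρ v p - w • consU γ ρ v p

/-- Sound speed `c = √(γ p / ρ)`. -/
def soundSpeed (γ ρ p : ℝ) : ℝ := Real.sqrt (γ * p / ρ)

/-- Rusanov wave speed `λ = max(|v_l − w| + c_l, |v_r − w| + c_r)`. -/
def rusanovSpeed (vl cl vr cr w : ℝ) : ℝ := max (|vl - w| + cl) (|vr - w| + cr)

/-- Rusanov numerical flux `ĝ(U_l, U_r, w) = ½(g(U_l,w) + g(U_r,w)) − ½ λ (U_r − U_l)`. -/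
def rusanovFlux (γ ρl vl pl ρr vr pr w : ℝ) : ℝ × ℝ × ℝ :=
  (1 / 2 : ℝ) • (aleFlux γ ρl vl pl w + aleFlux γ ρr vr pr w) -
    (rusanovSpeed vl (soundSpeed γ ρl pl) vr (soundSpeed γ ρr pr) w / 2) •
      (consU γ ρr vr pr - consU γ ρl vl pl)

/-- Pressure `(γ−1)(E − m²/(2ρ))` of a conserved vector `(ρ, m, E)`. -/
def pressureOf (γ : ℝ) (u : ℝ × ℝ × ℝ) : ℝ := (γ - 1) * (u.2.2 - u.2.1 ^ 2 / (2 * u.1))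

/-- A conserved vector with positive density and positive internal energy. -/
def PosState (u : ℝ × ℝ × ℝ) : Prop := 0 < u.1 ∧ 0 < u.2.2 - u.2.1 ^ 2 / (2 * u.1)

private lemma engel (m1 m2 r1 r2 : ℝ) (h1 : 0 < r1) (h2 : 0 < r2) :
    (m1 + m2) ^ 2 / (2 * (r1 + r2)) ≤ m1 ^ 2 / (2 * r1) + m2 ^ 2 / (2 * r2) := by
  rw [div_add_div _ _ (by positivity) (by positivity),
    div_le_div_iff₀ (by positivity) (by positivity)]
  nlinarith [sq_nonneg (m1 * r2 - m2 * r1), mul_pos h1 h2]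

private lemma PosState.add {u v : ℝ × ℝ × ℝ} (hu : PosState u) (hv : PosState v) :
    PosState (u + v) := by
  obtain ⟨hu1, hu2⟩ := hu
  obtain ⟨hv1, hv2⟩ := hv
  refine ⟨by simpa using add_pos hu1 hv1, ?_⟩
  have := engel u.2.1 v.2.1 u.1 v.1 hu1 hv1
  simp only [Prod.fst_add, Prod.snd_add]
  linarith

private lemma PosState.smul {u : ℝ × ℝ × ℝ} {a : ℝ} (ha : 0 < a) (hu : PosState u) :
    PosState (a • u) := by
  obtain ⟨hu1, hu2⟩ := hu
  refine ⟨by simpa using mul_pos ha hu1, ?_⟩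
  simp only [Prod.smul_fst, Prod.smul_snd, smul_eq_mul]
  have : (a * u.2.1) ^ 2 / (2 * (a * u.1)) = a * (u.2.1 ^ 2 / (2 * u.1)) := by
    field_simp
  rw [this]
  nlinarith

private lemma PosState.smul_nonneg_add {u v : ℝ × ℝ × ℝ} {a : ℝ} (ha : 0 ≤ a)
    (hu : PosState u) (hv : PosState v) : PosState (a • u + v) := by
  rcases eq_or_lt_of_le ha with h | h
  · simpa [← h] using hv
  · exact (hu.smul h).add hv

private lemma key_state (γ ρ v p s ε : ℝ) (hγ : 1 < γ) (hρ : 0 < ρ) (hp : 0 < p)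
    (hε : ε ^ 2 = 1) (hs : soundSpeed γ ρ p ≤ s) :
    PosState (ρ * s, ρ * v * s + ε * p, (p / (γ - 1) + ρ * v ^ 2 / 2) * s + ε * p * v) := by
  have hc : 0 < soundSpeed γ ρ p := Real.sqrt_pos.mpr (by positivity)
  have hs0 : 0 < s := lt_of_lt_of_le hc hs
  have hg1 : (0:ℝ) < γ - 1 := by linarith
  have hcs : γ * p / ρ ≤ s ^ 2 := by
    have h1 : soundSpeed γ ρ p ^ 2 = γ * p / ρ := Real.sq_sqrt (by positivity)
    nlinarith [hc.le]
  have h2 : γ * p ≤ ρ * s ^ 2 := by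
    rw [div_le_iff₀ hρ] at hcs; linarith
  set q := p / (γ - 1) with hq
  have hq0 : 0 < q := by positivity
  have hpq : p = (γ - 1) * q := by rw [hq, mul_div_assoc', eq_div_iff hg1.ne']; ring
  refine ⟨by positivity, ?_⟩
  simp only
  rw [sub_pos, div_lt_iff₀ (by positivity)]
  have he2 : ε ^ 2 * p ^ 2 = p ^ 2 := by rw [hε]; ring
  have hpp : p ^ 2 = (γ - 1) * q * p := by rw [hpq]; ring
  nlinarith [mul_le_mul_of_nonneg_left h2 hq0.le, mul_pos hq0 hp, he2, hpp]

private lemma consU_posState (γ ρ v p : ℝ) (hγ : 1 < γ) (hρ : 0 < ρ) (hp : 0 < p) :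
    PosState (consU γ ρ v p) := by
  have hg1 : (0:ℝ) < γ - 1 := by linarith
  refine ⟨hρ, ?_⟩
  have : (ρ * v) ^ 2 / (2 * ρ) = ρ * v ^ 2 / 2 := by field_simp
  simp only [consU, this]
  have hpg : 0 < p / (γ - 1) := by positivity
  linarith

/-- Theorem 1 of the paper: positivity of the first-order moving-mesh finite volume
scheme with Rusanov flux under the CFL condition. -/
theorem rusanov_first_order_positivity
    (γ β : ℝ) (hγ : 1 < γ) (hβ0 : 0 < β) (hβ1 : β < 1)
    (ρ₀ v₀ p₀ ρ₁ v₁ p₁ ρ₂ v₂ p₂ : ℝ)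
    (hρ₀ : 0 < ρ₀) (hp₀ : 0 < p₀) (hρ₁ : 0 < ρ₁) (hp₁ : 0 < p₁)
    (hρ₂ : 0 < ρ₂) (hp₂ : 0 < p₂)
    (wm wp : ℝ) (h Δt : ℝ) (hh : 0 < h) (hΔt : 0 < Δt)
    (lamM lamP : ℝ)
    (hlamM : lamM = rusanovSpeed v₀ (soundSpeed γ ρ₀ p₀) v₁ (soundSpeed γ ρ₁ p₁) wm)
    (hlamP : lamP = rusanovSpeed v₁ (soundSpeed γ ρ₁ p₁) v₂ (soundSpeed γ ρ₂ p₂) wp)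
    (cfl₁ : Δt ≤ (1 - β / 2) * h / ((lamM + lamP) / 2))
    (cfl₂ : Δt * |wp - wm| ≤ β * h)
    (h' : ℝ) (hh' : h' = h + Δt * (wp - wm))
    (U' : ℝ × ℝ × ℝ)
    (hU' : U' = (1 / h') •
      (h • consU γ ρ₁ v₁ p₁ -
        Δt • (rusanovFlux γ ρ₁ v₁ p₁ ρ₂ v₂ p₂ wp - rusanovFlux γ ρ₀ v₀ p₀ ρ₁ v₁ p₁ wm))) :
    0 < h' ∧ 0 < U'.1 ∧ 0 < pressureOf γ U' := by
  subst hlamM hlamP hh' hU'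
  set cM := soundSpeed γ ρ₀ p₀ with hcM
  set c1 := soundSpeed γ ρ₁ p₁ with hc1
  set cP := soundSpeed γ ρ₂ p₂ with hcP
  set lamM := rusanovSpeed v₀ cM v₁ c1 wm with hlM
  set lamP := rusanovSpeed v₁ c1 v₂ cP wp with hlP
  have hcM0 : 0 < cM := Real.sqrt_pos.mpr (by positivity)
  have hc10 : 0 < c1 := Real.sqrt_pos.mpr (by positivity)
  have hcP0 : 0 < cP := Real.sqrt_pos.mpr (by positivity)
  have hlamM1 : |v₀ - wm| + cM ≤ lamM := le_max_left _ _
  have hlamP1 : |v₂ - wp| + cP ≤ lamP := le_max_right _ _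
  have hlamM0 : 0 < lamM := lt_of_lt_of_le (by positivity) hlamM1
  have hlamP0 : 0 < lamP := lt_of_lt_of_le (by positivity) hlamP1
  have hcfl1 : Δt * ((lamM + lamP) / 2) ≤ (1 - β / 2) * h := by
    rw [← le_div_iff₀ (by positivity)]; exact cfl₁
  have hw : -(β * h) ≤ Δt * (wp - wm) := by
    have h1 : Δt * (wp - wm) ≥ -(Δt * |wp - wm|) := by
      have := neg_abs_le (wp - wm)
      nlinarith
    linarith
  have hh'0 : 0 < h + Δt * (wp - wm) := by nlinarith
  refine ⟨hh'0, ?_⟩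
  set α₀ : ℝ := h + Δt * (wp - wm) / 2 - Δt * (lamM + lamP) / 2 with hα
  have hα0 : 0 ≤ α₀ := by rw [hα]; nlinarith
  -- intermediate states
  set s : ℝ := lamP - (v₂ - wp) with hsdef
  set t : ℝ := lamM + (v₀ - wm) with htdef
  have hsc : cP ≤ s := by
    have := abs_nonneg (v₂ - wp)
    have := le_abs_self (v₂ - wp)
    rw [hsdef]; linarith
  have htc : cM ≤ t := by
    have := neg_abs_le (v₀ - wm)
    rw [htdef]; linarith
  have hAr : PosState (ρ₂ * s, ρ₂ * v₂ * s + (-1) * p₂,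
      (p₂ / (γ - 1) + ρ₂ * v₂ ^ 2 / 2) * s + (-1) * p₂ * v₂) :=
    key_state γ ρ₂ v₂ p₂ s (-1) hγ hρ₂ hp₂ (by norm_num) (hcP ▸ hsc)
  have hAl : PosState (ρ₀ * t, ρ₀ * v₀ * t + 1 * p₀,
      (p₀ / (γ - 1) + ρ₀ * v₀ ^ 2 / 2) * t + 1 * p₀ * v₀) :=
    key_state γ ρ₀ v₀ p₀ t 1 hγ hρ₀ hp₀ (by norm_num) (hcM ▸ htc)
  have hU1 : PosState (consU γ ρ₁ v₁ p₁) := consU_posState γ ρ₁ v₁ p₁ hγ hρ₁ hp₁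
  -- the algebraic decomposition
  have hdecomp : h • consU γ ρ₁ v₁ p₁ -
      Δt • (rusanovFlux γ ρ₁ v₁ p₁ ρ₂ v₂ p₂ wp - rusanovFlux γ ρ₀ v₀ p₀ ρ₁ v₁ p₁ wm) =
      α₀ • consU γ ρ₁ v₁ p₁ +
        ((Δt / 2) • (ρ₀ * t, ρ₀ * v₀ * t + 1 * p₀,
            (p₀ / (γ - 1) + ρ₀ * v₀ ^ 2 / 2) * t + 1 * p₀ * v₀) +
          (Δt / 2) • (ρ₂ * s, ρ₂ * v₂ * s + (-1) * p₂,
            (p₂ / (γ - 1) + ρ₂ * v₂ ^ 2 / 2) * s + (-1) * p₂ * v₂)) := by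
    simp only [hsdef, htdef, hα, ← hlM, ← hlP, consU, eulerFlux, aleFlux, rusanovFlux,
      Prod.smul_mk, Prod.mk_add_mk, Prod.mk_sub_mk, smul_eq_mul, Prod.mk.injEq,
      Prod.ext_iff, Prod.fst_add, Prod.snd_add, Prod.fst_sub, Prod.snd_sub,
      Prod.smul_fst, Prod.smul_snd]
    refine ⟨by ring, by ring, by ring⟩
  have hPos : PosState ((1 / (h + Δt * (wp - wm))) •
      (h • consU γ ρ₁ v₁ p₁ -
        Δt • (rusanovFlux γ ρ₁ v₁ p₁ ρ₂ v₂ p₂ wp - rusanovFlux γ ρ₀ v₀ p₀ ρ₁ v₁ p₁ wm))) := by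
    rw [hdecomp]
    exact PosState.smul (by positivity)
      (PosState.smul_nonneg_add hα0 hU1
        ((hAl.smul (by positivity)).add (hAr.smul (by positivity))))
  obtain ⟨hP1, hP2⟩ := hPos
  exact ⟨hP1, mul_pos (by linarith) hP2⟩
end
end

section
/- Positivity of the left intermediate state in the Rusanov positivity proof: let γ > 1, let (ρ, v, p) be a primitive state with ρ > 0 and p > 0, with conserved vector U, Euler flux F(U) and sound speed c = √(γp/ρ), and let λ, w ∈ ℝ satisfy (λ − w) + v ≥ c. Then the vector B = (λ − w)·U + F(U) = (ρ_B, m_B, E_B) satisfies ρ_B ≥ ρc > 0 and (γ−1)(E_B − m_B²/(2ρ_B)) > 0, i.e. B has positive density and positive pressure. -/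
noncomputable section

set_option maxHeartbeats 1000000 in
/-- Positivity of the left intermediate state `B = (λ − w)·U + F(U)` in the
Rusanov positivity proof: `ρ_B ≥ ρ c > 0` and `B` has positive pressure. -/
theorem left_intermediate_state_positivity
    (γ : ℝ) (hγ : 1 < γ) (ρ v p : ℝ) (hρ : 0 < ρ) (hp : 0 < p)
    (lam w : ℝ) (hsig : (lam - w) + v ≥ soundSpeed γ ρ p)
    (B : ℝ × ℝ × ℝ) (hB : B = (lam - w) • consU γ ρ v p + eulerFlux γ ρ v p) :
    B.1 ≥ ρ * soundSpeed γ ρ p ∧ 0 < ρ * soundSpeed γ ρ p ∧ 0 < pressureOf γ B := by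
  set c := soundSpeed γ ρ p with hc
  have hcc : 0 < γ * p / ρ := by positivity
  have hc2 : c ^ 2 = γ * p / ρ := Real.sq_sqrt hcc.le
  have hcpos : 0 < c := Real.sqrt_pos.mpr hcc
  set a := lam - w + v with ha
  have hage : a ≥ c := hsig
  have hapos : 0 < a := lt_of_lt_of_le hcpos hage
  have hB1 : B.1 = ρ * a := by
    subst hB
    simp only [consU, eulerFlux, Prod.smul_mk, Prod.mk_add_mk, smul_eq_mul, Prod.fst_add,
      Prod.smul_fst]
    rw [ha]; ring
  have hγ1 : γ - 1 > 0 := by linarith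
  refine ⟨?_, by positivity, ?_⟩
  · rw [hB1]; nlinarith
  · have key : pressureOf γ B = (2 * ρ * a ^ 2 * p - (γ - 1) * p ^ 2) / (2 * ρ * a) := by
      have hne : (lam - w) * ρ + ρ * v ≠ 0 := by
        have : (lam - w) * ρ + ρ * v = ρ * a := by rw [ha]; ring
        rw [this]; positivity
      subst hB
      simp only [pressureOf, consU, eulerFlux, Prod.smul_mk, Prod.mk_add_mk, smul_eq_mul]
      rw [ha]
      have hγne : γ - 1 ≠ 0 := ne_of_gt hγ1
      have hne2 : lam - w + v ≠ 0 := ne_of_gt hapos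
      have hρne : ρ ≠ 0 := ne_of_gt hρ
      field_simp
      ring
    rw [key]
    apply div_pos _ (by positivity)
    have h1 : a ^ 2 ≥ γ * p / ρ := by nlinarith
    have h2 : ρ * a ^ 2 ≥ γ * p := by
      rw [ge_iff_le, div_le_iff₀ hρ] at h1; linarith [h1]
    nlinarith
end
end

section
/- Positivity of the right intermediate state in the Rusanov positivity proof: let γ > 1, let (ρ, v, p) be a primitive state with ρ > 0 and p > 0, with conserved vector U, Euler flux F(U) and sound speed c = √(γp/ρ), and let λ, w ∈ ℝ satisfy (λ + w) − v ≥ c. Then the vector C = (λ + w)·U − F(U) = (ρ_C, m_C, E_C) satisfies ρ_C ≥ ρc > 0 and (γ−1)(E_C − m_C²/(2ρ_C)) > 0, i.e. C has positive density and positive pressure. -/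
noncomputable section

/-- Positivity of the right intermediate state `C = (λ + w)·U − F(U)` in the
Rusanov positivity proof: `ρ_C ≥ ρ c > 0` and `C` has positive pressure. -/
theorem right_intermediate_state_positivity
    (γ : ℝ) (hγ : 1 < γ) (ρ v p : ℝ) (hρ : 0 < ρ) (hp : 0 < p)
    (lam w : ℝ) (hsig : (lam + w) - v ≥ soundSpeed γ ρ p)
    (C : ℝ × ℝ × ℝ) (hC : C = (lam + w) • consU γ ρ v p - eulerFlux γ ρ v p) :
    C.1 ≥ ρ * soundSpeed γ ρ p ∧ 0 < ρ * soundSpeed γ ρ p ∧ 0 < pressureOf γ C := by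
  set c := soundSpeed γ ρ p with hcdef
  have hc2 : c ^ 2 = γ * p / ρ := by
    rw [hcdef, soundSpeed, Real.sq_sqrt (by positivity)]
  have hcpos : 0 < c := by
    rw [hcdef, soundSpeed]; positivity
  set d := lam + w - v with hddef
  have hd : d ≥ c := hsig
  have hdpos : 0 < d := lt_of_lt_of_le hcpos hd
  have hkey : ρ * d ^ 2 ≥ γ * p := by
    have h2 : d ^ 2 ≥ c ^ 2 := by nlinarith
    rw [hc2] at h2
    rw [ge_iff_le, ← div_le_iff₀' hρ]
    linarith [h2]
  have hC1 : C.1 = ρ * d := by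
    simp [hC, consU, eulerFlux, Prod.smul_def, smul_eq_mul]; ring
  have hγ1 : γ - 1 > 0 := by linarith
  refine ⟨by rw [hC1]; nlinarith, by positivity, ?_⟩
  have hC2 : C.2.1 = ρ * v * d - p := by
    simp [hC, consU, eulerFlux, Prod.smul_def, smul_eq_mul]; ring
  have hC3 : C.2.2 = (p / (γ - 1) + ρ * v ^ 2 / 2) * d - p * v := by
    simp [hC, consU, eulerFlux, Prod.smul_def, smul_eq_mul]; ring
  have hpe : pressureOf γ C = p * d - (γ - 1) * p ^ 2 / (2 * (ρ * d)) := by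
    rw [pressureOf, hC1, hC2, hC3]
    field_simp
    ring
  rw [hpe]
  rw [sub_pos, div_lt_iff₀ (by positivity)]
  nlinarith
end
end

section
/- Exact resolution of a moving contact discontinuity by the ALE HLLC flux: fix γ > 1 and let the left and right primitive states be (ρ_l, v, p) and (ρ_r, v, p) with ρ_l > 0, ρ_r > 0, p > 0 (equal velocities and pressures, arbitrary positive densities), and take the mesh velocity w = v. Then the ALE HLLC numerical flux ĝ(U_l, U_r, w) equals (0, p, vp), which coincides with the exact ALE flux F(U_l) − wU_l = F(U_r) − wU_r of both states; in particular the numerical flux introduces no dissipation across the contact. -/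
noncomputable section

open scoped Classical

/-- The ALE HLLC numerical flux of the left primitive state `(ρl, vl, pl)` and
right primitive state `(ρr, vr, pr)` with mesh velocity `w`, using the
Roe-average based signal speeds `S_l, S_r`. -/
def hllcFlux (γ ρl vl pl ρr vr pr w : ℝ) : ℝ × ℝ × ℝ :=
  let cl := soundSpeed γ ρl pl
  let cr := soundSpeed γ ρr pr
  let El := pl / (γ - 1) + ρl * vl ^ 2 / 2
  let Er := pr / (γ - 1) + ρr * vr ^ 2 / 2
  let Hl := (El + pl) / ρl
  let Hr := (Er + pr) / ρr
  let vhat := (Real.sqrt ρl * vl + Real.sqrt ρr * vr) / (Real.sqrt ρl + Real.sqrt ρr)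
  let Hhat := (Real.sqrt ρl * Hl + Real.sqrt ρr * Hr) / (Real.sqrt ρl + Real.sqrt ρr)
  let chat := Real.sqrt ((γ - 1) * (Hhat - vhat ^ 2 / 2))
  let vtl := vl - w
  let vtr := vr - w
  let Sl := min (vtl - cl) (vhat - w - chat)
  let Sr := max (vtr + cr) (vhat - w + chat)
  let SM := (ρr * vtr * (Sr - vtr) - ρl * vtl * (Sl - vtl) + pl - pr) /
      (ρr * (Sr - vtr) - ρl * (Sl - vtl))
  let pstar := ρl * (vtl - Sl) * (vtl - SM) + pl
  let Ulstar : ℝ × ℝ × ℝ := (1 / (Sl - SM)) •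
      ((Sl - vtl) * ρl, (Sl - vtl) * (ρl * vl) + pstar - pl,
        (Sl - vtl) * El - pl * vtl + pstar * SM)
  let Urstar : ℝ × ℝ × ℝ := (1 / (Sr - SM)) •
      ((Sr - vtr) * ρr, (Sr - vtr) * (ρr * vr) + pstar - pr,
        (Sr - vtr) * Er - pr * vtr + pstar * SM)
  let gstar : ℝ × ℝ × ℝ → ℝ × ℝ × ℝ := fun Us => SM • Us + (0, pstar, (SM + w) * pstar)
  if 0 < Sl then aleFlux γ ρl vl pl w
  else if 0 < SM then gstar Ulstar
  else if 0 ≤ Sr then gstar Urstar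
  else aleFlux γ ρr vr pr w


/-- Exact resolution of a moving contact discontinuity by the ALE HLLC flux:
for equal velocities and pressures and mesh velocity `w = v`, the HLLC flux
equals `(0, p, v p)`, the exact ALE flux of both states. -/
theorem hllc_flux_exact_on_moving_contact
    (γ ρl ρr v p : ℝ) (hγ : 1 < γ) (hρl : 0 < ρl) (hρr : 0 < ρr) (hp : 0 < p) :
    hllcFlux γ ρl v p ρr v p v = (0, p, v * p) ∧
      aleFlux γ ρl v p v = (0, p, v * p) ∧
      aleFlux γ ρr v p v = (0, p, v * p) := by
  have hale : ∀ ρ : ℝ, 0 < ρ → aleFlux γ ρ v p v = (0, p, v * p) := by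
    intro ρ hρ
    unfold aleFlux eulerFlux consU
    simp [Prod.ext_iff, Prod.smul_def, smul_eq_mul]
    ring_nf
    exact ⟨trivial, trivial, trivial⟩
  refine ⟨?_, hale ρl hρl, hale ρr hρr⟩
  unfold hllcFlux
  have hcl : 0 ≤ soundSpeed γ ρl p := Real.sqrt_nonneg _
  have hcr : 0 ≤ soundSpeed γ ρr p := Real.sqrt_nonneg _
  have hs : (0:ℝ) < Real.sqrt ρl + Real.sqrt ρr :=
    add_pos (Real.sqrt_pos.mpr hρl) (Real.sqrt_pos.mpr hρr)
  have hvhat : (Real.sqrt ρl * v + Real.sqrt ρr * v) / (Real.sqrt ρl + Real.sqrt ρr) = v := by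
    rw [← add_mul, mul_comm, mul_div_assoc, div_self hs.ne', mul_one]
  simp only [hvhat, sub_self, mul_zero, zero_mul, zero_sub, sub_zero, add_zero, zero_add,
    zero_div]
  rw [if_neg (not_lt.mpr (le_trans (min_le_left _ _) (neg_nonpos.mpr hcl))),
    if_neg (lt_irrefl 0),
    if_pos (le_trans hcr (le_max_left _ _)), zero_smul, zero_add]
end
end
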